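/- Let X₁, X₂ be random variables supported on a finite set 𝒳, and let δ = Δ(X₁,X₂) be their total variation distance. If 0 ≤ δ ≤ (|𝒳|-1)/|𝒳|, then |H(X₁) - H(X₂)| ≤ h(δ) + δ·log₂(|𝒳|-1), where h is the binary entropy function. -/

import Mathlib

open Finset

noncomputable section

/-- `p` is a probability mass function on the finite type `Ω`. -/
def IsPMF {Ω : Type*} [Fintype Ω] (p : Ω → ℝ) : Prop :=
  (∀ ω, 0 ≤ p ω) ∧ ∑ ω, p ω = 1

/-- Probability that the random variable `X` equals `x` under `p`. -/
def pr {Ω α : Type*} [Fintype Ω] [DecidableEq α] (p : Ω → ℝ) (X : Ω → α) (x : α) : ℝ :=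
  ∑ ω, if X ω = x then p ω else 0

/-- Shannon entropy (base 2) of a distribution `q` on a finite type. -/
def Hq {α : Type*} [Fintype α] (q : α → ℝ) : ℝ :=
  ∑ x, -(q x * Real.logb 2 (q x))

/-- Shannon entropy (base 2) of the random variable `X` under `p`. -/
def Hent {Ω α : Type*} [Fintype Ω] [Fintype α] [DecidableEq α] (p : Ω → ℝ) (X : Ω → α) : ℝ :=
  Hq (pr p X)

/-- Conditional entropy `H(X|Y) = H(X,Y) - H(Y)`. -/
def condH {Ω α β : Type*} [Fintype Ω] [Fintype α] [Fintype β] [DecidableEq α] [DecidableEq β]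
    (p : Ω → ℝ) (X : Ω → α) (Y : Ω → β) : ℝ :=
  Hent p (fun ω => (X ω, Y ω)) - Hent p Y

/-- Mutual information `I(X;Y)`. -/
def MI {Ω α β : Type*} [Fintype Ω] [Fintype α] [Fintype β] [DecidableEq α] [DecidableEq β]
    (p : Ω → ℝ) (X : Ω → α) (Y : Ω → β) : ℝ :=
  Hent p X + Hent p Y - Hent p (fun ω => (X ω, Y ω))

/-- Conditional mutual information `I(X;Y|Z) = H(X|Z) - H(X|(Y,Z))`. -/
def condMI {Ω α β γ : Type*} [Fintype Ω] [Fintype α] [Fintype β] [Fintype γ]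
    [DecidableEq α] [DecidableEq β] [DecidableEq γ]
    (p : Ω → ℝ) (X : Ω → α) (Y : Ω → β) (Z : Ω → γ) : ℝ :=
  condH p X Z - condH p X (fun ω => (Y ω, Z ω))

/-- Total variation distance between distributions on a finite type. -/
def TV {α : Type*} [Fintype α] (q₁ q₂ : α → ℝ) : ℝ :=
  (∑ x, |q₁ x - q₂ x|) / 2

/-- Binary entropy function (base 2). -/
def binEnt (d : ℝ) : ℝ :=
  -(d * Real.logb 2 d) - ((1 - d) * Real.logb 2 (1 - d))

/-- Min-entropy (base 2) of a distribution on a nonempty finite type. -/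
def Hinf {α : Type*} [Fintype α] [Nonempty α] (q : α → ℝ) : ℝ :=
  -Real.logb 2 (⨆ x, q x)

private lemma negMulLog_add_le {a b : ℝ} (ha : 0 ≤ a) (hb : 0 ≤ b) :
    Real.negMulLog (a + b) ≤ Real.negMulLog a + Real.negMulLog b := by
  rcases ha.eq_or_lt with h | h
  · simp [← h]
  rcases hb.eq_or_lt with h' | h'
  · simp [← h']
  have l1 : Real.log a ≤ Real.log (a + b) := Real.log_le_log h (by linarith)
  have l2 : Real.log b ≤ Real.log (a + b) := Real.log_le_log h' (by linarith)
  simp only [Real.negMulLog, neg_mul]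
  nlinarith

private lemma sum_negMulLog_le_log_card {α : Type*} (S : Finset α) (s : α → ℝ)
    (hs : ∀ x, 0 ≤ s x) (hsum : ∑ x ∈ S, s x = 1) :
    ∑ x ∈ S, Real.negMulLog (s x) ≤ Real.log S.card := by
  have hSne : S.Nonempty := by
    by_contra h
    rw [Finset.not_nonempty_iff_eq_empty] at h
    simp [h] at hsum
  have hS : 0 < (S.card : ℝ) := by exact_mod_cast Finset.card_pos.2 hSne
  have key : ∀ x ∈ S, Real.negMulLog (s x) - s x * Real.log S.card ≤ (S.card : ℝ)⁻¹ - s x := by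
    intro x _
    rcases (hs x).eq_or_lt with h | h
    · simp [← h]
    · have h2 : (0:ℝ) < (s x * S.card)⁻¹ := by positivity
      have hlog := Real.log_le_sub_one_of_pos h2
      rw [Real.log_inv, Real.log_mul (ne_of_gt h) (ne_of_gt hS)] at hlog
      have hmul := mul_le_mul_of_nonneg_left hlog (hs x)
      have e : s x * ((s x * (S.card : ℝ))⁻¹ - 1) = (S.card : ℝ)⁻¹ - s x := by
        field_simp
      rw [e] at hmul
      calc Real.negMulLog (s x) - s x * Real.log S.card
          = s x * -(Real.log (s x) + Real.log S.card) := by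
            simp only [Real.negMulLog]; ring
        _ ≤ (S.card : ℝ)⁻¹ - s x := hmul
  have hsumle := Finset.sum_le_sum key
  rw [Finset.sum_sub_distrib, ← Finset.sum_mul, hsum, one_mul] at hsumle
  rw [Finset.sum_sub_distrib, Finset.sum_const, hsum, nsmul_eq_mul] at hsumle
  have : (S.card : ℝ) * (S.card : ℝ)⁻¹ - 1 = 0 := by
    field_simp
    ring
  linarith

private lemma oneSided {𝒳 : Type*} [Fintype 𝒳] (p q : 𝒳 → ℝ)
    (hp : IsPMF p) (hq : IsPMF q) (δ : ℝ) (hδ : δ = TV p q) :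
    ∑ x, Real.negMulLog (p x) - ∑ x, Real.negMulLog (q x) ≤
      Real.negMulLog δ + Real.negMulLog (1 - δ) +
        δ * Real.log ((Fintype.card 𝒳 : ℝ) - 1) := by
  classical
  obtain ⟨hp0, hp1⟩ := hp
  obtain ⟨hq0, hq1⟩ := hq
  have habs : ∀ x, |p x - q x| = p x + q x - 2 * min (p x) (q x) := by
    intro x
    rcases le_total (p x) (q x) with h | h
    · rw [abs_of_nonpos (by linarith), min_eq_left h]; ring
    · rw [abs_of_nonneg (by linarith), min_eq_right h]; ring
  have hsumabs : ∑ x, |p x - q x| = 2 * δ := by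
    rw [hδ, TV]; ring
  have hminsum : ∑ x, min (p x) (q x) = 1 - δ := by
    have h1 := Finset.sum_congr rfl (fun x (_ : x ∈ Finset.univ) => habs x)
    rw [hsumabs] at h1
    have h2 : ∑ x, (p x + q x - 2 * min (p x) (q x)) =
        2 - 2 * ∑ x, min (p x) (q x) := by
      rw [Finset.sum_sub_distrib, Finset.sum_add_distrib, hp1, hq1, ← Finset.mul_sum]; ring
    rw [h2] at h1; linarith
  have hδ0 : 0 ≤ δ := by
    have h0 : 0 ≤ ∑ x, |p x - q x| := Finset.sum_nonneg fun x _ => abs_nonneg _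
    linarith [hsumabs]
  have hδ1 : δ ≤ 1 := by
    have h0 : 0 ≤ ∑ x, min (p x) (q x) :=
      Finset.sum_nonneg fun x _ => le_min (hp0 x) (hq0 x)
    linarith [hminsum]
  rcases hδ0.eq_or_lt with hzero | hδpos
  · -- δ = 0 : p = q
    have hpq : ∀ x ∈ Finset.univ, |p x - q x| = 0 := by
      refine (Finset.sum_eq_zero_iff_of_nonneg (fun x _ => abs_nonneg _)).1 ?_
      rw [hsumabs, ← hzero]; ring
    have hsame : ∑ x, Real.negMulLog (p x) = ∑ x, Real.negMulLog (q x) :=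
      Finset.sum_congr rfl fun x hx => by
        have h1 := abs_eq_zero.1 (hpq x hx)
        have h2 : p x = q x := by linarith
        rw [h2]
    rw [hsame, ← hzero]
    simp
  -- main case : δ > 0
  set a : 𝒳 → ℝ := fun x => min (p x) (q x) with ha
  set s : 𝒳 → ℝ := fun x => (p x - a x) / δ with hs
  set t : 𝒳 → ℝ := fun x => (q x - a x) / δ with ht
  have ha0 : ∀ x, 0 ≤ a x := fun x => le_min (hp0 x) (hq0 x)
  have hap : ∀ x, a x ≤ p x := fun x => min_le_left _ _
  have haq : ∀ x, a x ≤ q x := fun x => min_le_right _ _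
  have hs0 : ∀ x, 0 ≤ s x := fun x => div_nonneg (by linarith [hap x]) hδ0
  have ht0 : ∀ x, 0 ≤ t x := fun x => div_nonneg (by linarith [haq x]) hδ0
  have hasum : ∑ x, a x = 1 - δ := hminsum
  have hssum : ∑ x, s x = 1 := by
    simp only [hs]
    rw [← Finset.sum_div, Finset.sum_sub_distrib, hp1, hasum]
    field_simp
    ring
  have htsum : ∑ x, t x = 1 := by
    simp only [ht]
    rw [← Finset.sum_div, Finset.sum_sub_distrib, hq1, hasum]
    field_simp
    ring
  have hds : ∀ x, δ * s x = p x - a x := by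
    intro x
    simp only [hs]
    rw [mul_comm, div_mul_cancel₀ _ (ne_of_gt hδpos)]
  have hdt : ∀ x, δ * t x = q x - a x := by
    intro x
    simp only [ht]
    rw [mul_comm, div_mul_cancel₀ _ (ne_of_gt hδpos)]
  -- Upper bound for H(p)
  have hup : ∑ x, Real.negMulLog (p x) ≤
      ∑ x, Real.negMulLog (a x) + (Real.negMulLog δ + δ * ∑ x, Real.negMulLog (s x)) := by
    have step : ∀ x ∈ Finset.univ, Real.negMulLog (p x) ≤
        Real.negMulLog (a x) + (s x * Real.negMulLog δ + δ * Real.negMulLog (s x)) := by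
      intro x _
      have hpe : p x = a x + δ * s x := by rw [hds x]; ring
      have h1 : Real.negMulLog (p x) ≤ Real.negMulLog (a x) + Real.negMulLog (δ * s x) := by
        rw [hpe]
        exact negMulLog_add_le (ha0 x) (mul_nonneg hδ0 (hs0 x))
      rw [Real.negMulLog_mul] at h1
      linarith
    have h2 := Finset.sum_le_sum step
    rw [Finset.sum_add_distrib, Finset.sum_add_distrib, ← Finset.sum_mul, hssum, one_mul,
      ← Finset.mul_sum] at h2
    exact h2
  -- Lower bound for H(q)
  have ht1 : ∀ x, t x ≤ 1 := by
    intro x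
    have h1 := Finset.single_le_sum (fun i (_ : i ∈ Finset.univ) => ht0 i) (Finset.mem_univ x)
    rw [htsum] at h1
    exact h1
  have hq1' : ∀ x, q x ≤ 1 := by
    intro x
    have h1 := Finset.single_le_sum (fun i (_ : i ∈ Finset.univ) => hq0 i) (Finset.mem_univ x)
    rw [hq1] at h1
    exact h1
  have hlow : ∑ x, Real.negMulLog (a x) - Real.negMulLog (1 - δ) ≤
      ∑ x, Real.negMulLog (q x) := by
    rcases (by linarith : (0:ℝ) ≤ 1 - δ).eq_or_lt with hA | hA
    · have hz : ∀ x ∈ Finset.univ, a x = 0 :=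
        (Finset.sum_eq_zero_iff_of_nonneg (fun x _ => ha0 x)).1 (by rw [hasum, ← hA])
      have e1 : ∑ x, Real.negMulLog (a x) = 0 :=
        Finset.sum_eq_zero fun x hx => by rw [hz x hx, Real.negMulLog_zero]
      rw [e1, ← hA, Real.negMulLog_zero]
      simpa using Finset.sum_nonneg fun x _ => Real.negMulLog_nonneg (hq0 x) (hq1' x)
    · set A : ℝ := 1 - δ with hAdef
      set r : 𝒳 → ℝ := fun x => a x / A with hr
      have hr0 : ∀ x, 0 ≤ r x := fun x => div_nonneg (ha0 x) hA.le
      have hrsum : ∑ x, r x = 1 := by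
        simp only [hr]
        rw [← Finset.sum_div, hasum]
        field_simp
      have har : ∀ x, A * r x = a x := by
        intro x
        simp only [hr]
        rw [mul_comm, div_mul_cancel₀ _ (ne_of_gt hA)]
      have step : ∀ x ∈ Finset.univ, A * Real.negMulLog (r x) ≤ Real.negMulLog (q x) := by
        intro x _
        have hconc := Real.concaveOn_negMulLog.2 (Set.mem_Ici.2 (hr0 x))
          (Set.mem_Ici.2 (ht0 x)) hA.le hδpos.le (by rw [hAdef]; ring)
        simp only [smul_eq_mul] at hconc
        have hqeq : A * r x + δ * t x = q x := by rw [har x, hdt x]; ring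
        rw [hqeq] at hconc
        have hft := Real.negMulLog_nonneg (ht0 x) (ht1 x)
        nlinarith
      have h2 := Finset.sum_le_sum step
      rw [← Finset.mul_sum] at h2
      have e2 : ∑ x, Real.negMulLog (a x) =
          Real.negMulLog A + A * ∑ x, Real.negMulLog (r x) := by
        have e3 : ∀ x ∈ Finset.univ, Real.negMulLog (a x) =
            r x * Real.negMulLog A + A * Real.negMulLog (r x) := by
          intro x _
          rw [← har x, Real.negMulLog_mul]
        rw [Finset.sum_congr rfl e3, Finset.sum_add_distrib, ← Finset.sum_mul, hrsum, one_mul,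
          ← Finset.mul_sum]
      linarith
  -- Max-entropy bound for s
  set S : Finset 𝒳 := Finset.univ.filter (fun x => q x < p x) with hS
  have hsnotin : ∀ x ∉ S, s x = 0 := by
    intro x hx
    simp only [hS, Finset.mem_filter, Finset.mem_univ, true_and, not_lt] at hx
    simp only [hs, ha]
    rw [min_eq_left hx]
    simp
  have hsS : ∑ x ∈ S, s x = 1 := by
    rw [← hssum]
    exact Finset.sum_subset (Finset.subset_univ S) (fun x _ hx => hsnotin x hx)
  have hHs : ∑ x, Real.negMulLog (s x) ≤ Real.log S.card := by
    have e4 : ∑ x, Real.negMulLog (s x) = ∑ x ∈ S, Real.negMulLog (s x) :=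
      (Finset.sum_subset (Finset.subset_univ S)
        (fun x _ hx => by rw [hsnotin x hx, Real.negMulLog_zero])).symm
    rw [e4]
    exact sum_negMulLog_le_log_card S s hs0 hsS
  have hSne : S.Nonempty := by
    by_contra h
    rw [Finset.not_nonempty_iff_eq_empty] at h
    rw [h] at hsS
    simp at hsS
  have hSneq : S ≠ Finset.univ := by
    intro h
    have hsum0 : ∑ x, (p x - q x) = 0 := by rw [Finset.sum_sub_distrib, hp1, hq1]; ring
    have hpos : 0 < ∑ x ∈ S, (p x - q x) := by
      refine Finset.sum_pos (fun x hx => ?_) hSne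
      simp only [hS, Finset.mem_filter, Finset.mem_univ, true_and] at hx
      linarith
    rw [h] at hpos
    linarith
  have hScard : (S.card : ℝ) ≤ (Fintype.card 𝒳 : ℝ) - 1 := by
    have h1 : S.card < Fintype.card 𝒳 :=
      Finset.card_lt_card (Finset.ssubset_univ_iff.2 hSneq)
    have h2 : S.card + 1 ≤ Fintype.card 𝒳 := h1
    have h3 : ((S.card : ℝ) + 1) ≤ (Fintype.card 𝒳 : ℝ) := by exact_mod_cast h2
    linarith
  have hlogS : Real.log S.card ≤ Real.log ((Fintype.card 𝒳 : ℝ) - 1) := by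
    refine Real.log_le_log ?_ hScard
    exact_mod_cast Finset.card_pos.2 hSne
  have hfinal : δ * ∑ x, Real.negMulLog (s x) ≤ δ * Real.log ((Fintype.card 𝒳 : ℝ) - 1) :=
    mul_le_mul_of_nonneg_left (hHs.trans hlogS) hδ0
  linarith

/-- Continuity of entropy in total variation distance: if
`δ = Δ(X₁,X₂) ≤ (|𝒳|-1)/|𝒳|`, then `|H(X₁) - H(X₂)| ≤ h(δ) + δ·log₂(|𝒳|-1)`. -/
theorem stmt_5 {𝒳 : Type*} [Fintype 𝒳] (q₁ q₂ : 𝒳 → ℝ)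
    (h₁ : IsPMF q₁) (h₂ : IsPMF q₂) (δ : ℝ) (hδ : δ = TV q₁ q₂)
    (hδ0 : 0 ≤ δ) (hδ1 : δ ≤ ((Fintype.card 𝒳 : ℝ) - 1) / (Fintype.card 𝒳 : ℝ)) :
    |Hq q₁ - Hq q₂| ≤ binEnt δ + δ * Real.logb 2 ((Fintype.card 𝒳 : ℝ) - 1) := by
  simp only [Hq, binEnt]
  have hlog2 : (0:ℝ) < Real.log 2 := Real.log_pos one_lt_two
  have hHq : ∀ r : 𝒳 → ℝ, (∑ x, -(r x * Real.logb 2 (r x)))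
      = (∑ x, Real.negMulLog (r x)) / Real.log 2 := by
    intro r
    rw [Finset.sum_div]
    refine Finset.sum_congr rfl fun x _ => ?_
    rw [Real.logb, Real.negMulLog]
    field_simp
  have hbin : (-(δ * Real.logb 2 δ) - ((1 - δ) * Real.logb 2 (1 - δ)))
      = (Real.negMulLog δ + Real.negMulLog (1 - δ)) / Real.log 2 := by
    rw [Real.logb, Real.logb, Real.negMulLog, Real.negMulLog]
    field_simp
    ring
  have hlb : Real.logb 2 ((Fintype.card 𝒳 : ℝ) - 1)
      = Real.log ((Fintype.card 𝒳 : ℝ) - 1) / Real.log 2 := rfl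
  have h12 := oneSided q₁ q₂ h₁ h₂ δ hδ
  have h21 := oneSided q₂ q₁ h₂ h₁ δ (by
    rw [hδ, TV, TV]
    congr 1
    exact Finset.sum_congr rfl fun x _ => abs_sub_comm _ _)
  rw [abs_sub_le_iff]
  constructor <;>
  · rw [hHq, hHq, hbin, hlb, ← sub_div, ← mul_div_assoc, ← add_div]
    apply div_le_div_of_nonneg_right _ hlog2.le
    first
      | exact h12
      | exact h21


end
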